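/- Let 1 < p < ∞ and let v : [a,b] → ℝ be C¹ with v, v' ∈ Lᵖ(a,b). Then |v(a)|ᵖ ≤ C (‖v‖_{Lᵖ(a,b)}ᵖ + ‖v'‖_{Lᵖ(a,b)}ᵖ) where C = max(p − 1 + (b−a)^{−1}, 1). (One-dimensional trace inequality obtained via the cutoff function ζ(t) = 1 − (t−a)/(b−a), integration by parts, and Young's inequality.) -/

import Mathlib

open MeasureTheory intervalIntegral


/-- Bound on the derivative term: `|p |z|^{p-2} z| ≤ p |z|^{p-1}`. -/
lemma abs_deriv_abs_rpow_le {p : ℝ} (hp : 1 < p) (z : ℝ) :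
    |p * |z| ^ (p - 2) * z| ≤ p * |z| ^ (p - 1) := by
  rcases eq_or_ne z 0 with rfl | hz
  · simp
    positivity
  · have habs : (0 : ℝ) < |z| := abs_pos.2 hz
    rw [abs_mul, abs_mul, abs_of_pos (by linarith : (0:ℝ) < p),
      abs_of_nonneg (Real.rpow_nonneg (abs_nonneg z) _)]
    exact le_of_eq (by
      rw [show p - 1 = (p - 2) + 1 by ring, Real.rpow_add_one habs.ne']; ring)

/-- Continuity of the derivative function. -/
lemma continuous_abs_rpow_deriv {p : ℝ} (hp : 1 < p) :
    Continuous (fun x : ℝ => p * |x| ^ (p - 2) * x) := by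
  rw [continuous_iff_continuousAt]
  intro x
  rcases eq_or_ne x 0 with rfl | hx
  · rw [ContinuousAt]
    simp only [abs_zero, mul_zero]
    apply squeeze_zero_norm' (a := fun x : ℝ => p * |x| ^ (p - 1))
    · filter_upwards with y
      rcases eq_or_ne y 0 with rfl | hy
      · simp
        positivity
      · have habs : (0 : ℝ) < |y| := abs_pos.2 hy
        rw [Real.norm_eq_abs, abs_mul, abs_mul, abs_of_pos (by linarith : (0:ℝ) < p),
          abs_of_nonneg (Real.rpow_nonneg (abs_nonneg y) _)]
        exact le_of_eq (by
          rw [show p - 1 = (p - 2) + 1 by ring, Real.rpow_add_one habs.ne']; ring)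
    · have hc : ContinuousAt (fun y : ℝ => p * |y| ^ (p - 1)) 0 :=
        continuousAt_const.mul ((Real.continuousAt_rpow_const _ _
          (Or.inr (by linarith))).comp continuous_abs.continuousAt)
      have h0 : (fun y : ℝ => p * |y| ^ (p - 1)) 0 = 0 := by
        simp [Real.zero_rpow (show p - 1 ≠ 0 by linarith)]
      simpa [Real.zero_rpow (show p - 1 ≠ 0 by linarith)] using hc.tendsto
  · exact (continuousAt_const.mul ((Real.continuousAt_rpow_const _ _
      (Or.inl (abs_ne_zero.2 hx))).comp continuous_abs.continuousAt)).mul continuousAt_id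

/-- Young-type pointwise bound: `p |z|^{p-1} |w| ≤ (p-1)|z|^p + |w|^p`. -/
lemma young_pointwise {p : ℝ} (hp : 1 < p) (z w : ℝ) :
    p * (|z| ^ (p - 1) * |w|) ≤ (p - 1) * |z| ^ p + |w| ^ p := by
  have hq : p.HolderConjugate (p / (p - 1)) := Real.HolderConjugate.conjExponent hp
  set q := p / (p - 1) with hqdef
  have hY := Real.young_inequality_of_nonneg
    (Real.rpow_nonneg (abs_nonneg z) (p - 1)) (abs_nonneg w) hq.symm
  -- hY : |z|^{p-1} * |w| ≤ (|z|^{p-1})^q / q + |w|^p / p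
  have h1 : (|z| ^ (p - 1)) ^ q = |z| ^ p := by
    rw [← Real.rpow_mul (abs_nonneg z), hq.sub_one_mul_conj]
  rw [h1] at hY
  have hpq : p / q = p - 1 := hq.div_conj_eq_sub_one
  have hp0 : (0 : ℝ) < p := by linarith
  have hq0 : q ≠ 0 := hq.symm.ne_zero
  calc p * (|z| ^ (p - 1) * |w|) ≤ p * (|z| ^ p / q + |w| ^ p / p) :=
        mul_le_mul_of_nonneg_left hY hp0.le
    _ = (p / q) * |z| ^ p + |w| ^ p := by field_simp
    _ = (p - 1) * |z| ^ p + |w| ^ p := by rw [hpq]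

/-- **One-dimensional trace inequality.** Let `1 < p < ∞`, `a < b`, and let `v` be C¹
on `[a,b]` with derivative `v'`. Then
`|v(a)|ᵖ ≤ C (‖v‖_{Lᵖ(a,b)}ᵖ + ‖v'‖_{Lᵖ(a,b)}ᵖ)` with `C = max (p − 1 + (b−a)⁻¹) 1`. -/
theorem one_dim_trace_inequality
    (p : ℝ) (hp : 1 < p) (a b : ℝ) (hab : a < b)
    (v v' : ℝ → ℝ)
    (hv : ∀ t ∈ Set.Icc a b, HasDerivWithinAt v (v' t) (Set.Icc a b) t)
    (hv' : ContinuousOn v' (Set.Icc a b)) :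
    |v a| ^ p ≤ max (p - 1 + (b - a)⁻¹) 1 *
      ((∫ t in a..b, |v t| ^ p) + ∫ t in a..b, |v' t| ^ p) := by
  have hba : (0:ℝ) < b - a := sub_pos.2 hab
  set c := (b - a)⁻¹ with hc
  have hc0 : 0 < c := inv_pos.2 hba
  set ζ : ℝ → ℝ := fun t => (b - t) * c with hζdef
  set G' : ℝ → ℝ := fun x => p * |x| ^ (p - 2) * x with hG'def
  set F : ℝ → ℝ := fun t => ζ t * |v t| ^ p with hFdef
  set F' : ℝ → ℝ := fun t => -c * |v t| ^ p + ζ t * (G' (v t) * v' t) with hF'def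
  have hvc : ContinuousOn v (Set.Icc a b) := fun t ht => (hv t ht).continuousWithinAt
  have hvp : ContinuousOn (fun t => |v t| ^ p) (Set.Icc a b) :=
    hvc.abs.rpow_const (fun t ht => Or.inr (by linarith))
  have hv'p : ContinuousOn (fun t => |v' t| ^ p) (Set.Icc a b) :=
    hv'.abs.rpow_const (fun t ht => Or.inr (by linarith))
  have hζc : Continuous ζ := (continuous_const.sub continuous_id).mul continuous_const
  have hcontF : ContinuousOn F (Set.Icc a b) := hζc.continuousOn.mul hvp
  have hcontF' : ContinuousOn F' (Set.Icc a b) := by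
    apply ContinuousOn.add
    · exact continuousOn_const.mul hvp
    · exact hζc.continuousOn.mul
        (((continuous_abs_rpow_deriv hp).comp_continuousOn hvc).mul hv')
  have hder : ∀ t ∈ Set.Icc a b, HasDerivWithinAt F (F' t) (Set.Icc a b) t := by
    intro t ht
    have h1 : HasDerivWithinAt ζ (-c) (Set.Icc a b) t := by
      have := ((((hasDerivAt_id t).const_sub b).mul_const c)).hasDerivWithinAt
        (s := Set.Icc a b)
      rw [show -c = -1 * c by ring]; exact this
    have h2 : HasDerivWithinAt (fun s => |v s| ^ p) (G' (v t) * v' t) (Set.Icc a b) t :=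
      (hasDerivAt_abs_rpow (v t) hp).comp_hasDerivWithinAt t (hv t ht)
    exact h1.mul h2
  have hFb : F b = 0 := by simp [hFdef, hζdef]
  have hFa : F a = |v a| ^ p := by
    simp only [hFdef, hζdef, hc]
    rw [mul_inv_cancel₀ hba.ne', one_mul]
  have huIcc : Set.uIcc a b = Set.Icc a b := Set.uIcc_of_le hab.le
  have hintF' : IntervalIntegrable F' volume a b :=
    ContinuousOn.intervalIntegrable (huIcc ▸ hcontF')
  have hIv : IntervalIntegrable (fun t => |v t| ^ p) volume a b :=
    ContinuousOn.intervalIntegrable (huIcc ▸ hvp)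
  have hIv' : IntervalIntegrable (fun t => |v' t| ^ p) volume a b :=
    ContinuousOn.intervalIntegrable (huIcc ▸ hv'p)
  have hkey : ∫ t in a..b, F' t = F b - F a :=
    integral_eq_sub_of_hasDeriv_right_of_le hab.le hcontF
      (fun x hx => ((hder x (Set.Ioo_subset_Icc_self hx)).hasDerivAt
        (Icc_mem_nhds hx.1 hx.2)).hasDerivWithinAt) hintF'
  have hva : |v a| ^ p = ∫ t in a..b, (-F' t) := by
    rw [intervalIntegral.integral_neg, hkey, hFb, hFa]; ring
  set g : ℝ → ℝ := fun t => (c + (p - 1)) * |v t| ^ p + |v' t| ^ p with hgdef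
  have hgint : IntervalIntegrable g volume a b := (hIv.const_mul _).add hIv'
  have hpt : ∀ t ∈ Set.Icc a b, -F' t ≤ g t := by
    intro t ht
    have hζ0 : 0 ≤ ζ t := mul_nonneg (sub_nonneg.2 ht.2) hc0.le
    have hζ1 : ζ t ≤ 1 := by
      have h1 : (b - t) ≤ (b - a) := by linarith [ht.1]
      calc (b - t) * c ≤ (b - a) * c := mul_le_mul_of_nonneg_right h1 hc0.le
        _ = 1 := mul_inv_cancel₀ hba.ne'
    have hb1 : |G' (v t) * v' t| ≤ p * (|v t| ^ (p - 1) * |v' t|) := by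
      rw [abs_mul]
      calc |G' (v t)| * |v' t| ≤ (p * |v t| ^ (p - 1)) * |v' t| :=
            mul_le_mul_of_nonneg_right (abs_deriv_abs_rpow_le hp (v t)) (abs_nonneg _)
        _ = p * (|v t| ^ (p - 1) * |v' t|) := by ring
    have hyoung := young_pointwise hp (v t) (v' t)
    have hneg : -(ζ t * (G' (v t) * v' t)) ≤ p * (|v t| ^ (p - 1) * |v' t|) := by
      calc -(ζ t * (G' (v t) * v' t)) ≤ |ζ t * (G' (v t) * v' t)| := neg_le_abs _
        _ = ζ t * |G' (v t) * v' t| := by rw [abs_mul, abs_of_nonneg hζ0]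
        _ ≤ 1 * (p * (|v t| ^ (p - 1) * |v' t|)) :=
            mul_le_mul hζ1 hb1 (abs_nonneg _) zero_le_one
        _ = p * (|v t| ^ (p - 1) * |v' t|) := one_mul _
    have expand : -F' t = c * |v t| ^ p + -(ζ t * (G' (v t) * v' t)) := by
      simp only [hF'def]; ring
    have hgt : g t = (c + (p - 1)) * |v t| ^ p + |v' t| ^ p := rfl
    rw [expand, hgt]
    linarith
  have hmono := intervalIntegral.integral_mono_on hab.le hintF'.neg hgint hpt
  have hsplit : ∫ t in a..b, g t
      = (c + (p - 1)) * (∫ t in a..b, |v t| ^ p) + ∫ t in a..b, |v' t| ^ p := by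
    rw [hgdef, intervalIntegral.integral_add (hIv.const_mul _) hIv',
      intervalIntegral.integral_const_mul]
  set I1 := ∫ t in a..b, |v t| ^ p with hI1def
  set I2 := ∫ t in a..b, |v' t| ^ p with hI2def
  have hI1 : 0 ≤ I1 := intervalIntegral.integral_nonneg hab.le
    (fun t _ => Real.rpow_nonneg (abs_nonneg _) p)
  have hI2 : 0 ≤ I2 := intervalIntegral.integral_nonneg hab.le
    (fun t _ => Real.rpow_nonneg (abs_nonneg _) p)
  set M := max (p - 1 + (b - a)⁻¹) 1 with hM
  have hm1 : c + (p - 1) ≤ M := by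
    have := le_max_left (p - 1 + (b - a)⁻¹) 1
    rw [hc]; linarith
  have hm2 : (1:ℝ) ≤ M := le_max_right _ _
  calc |v a| ^ p = ∫ t in a..b, (-F' t) := hva
    _ ≤ ∫ t in a..b, g t := hmono
    _ = (c + (p - 1)) * I1 + I2 := hsplit
    _ ≤ M * I1 + M * I2 := by nlinarith
    _ = M * (I1 + I2) := by ring
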